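/- arXiv:1709.00582 — 2 statements merged into one kernel-verified Lean document; each statement's English description precedes it below -/
import Mathlib

section
/- Lower bound for FK probabilities under a magnetic field (finite-graph version of Lemma 4.1, with the normalization made explicit): for every h ≥ 0, taking constant external field H ≡ h, and every event A ⊆ {0,1}^E, P̃_{J,h}(A) ≥ P̃_{J,0}(A) / E_{P_{J,0}}[ exp( h · ∑_{v∈V} σ_v ) ]. -/
open scoped Classical

namespace FK

variable {V : Type*} [Fintype V] [DecidableEq V]

/-- Internal bond configurations on the edge set `E`. -/
abbrev Config (E : Finset (Sym2 V)) : Type _ := {e : Sym2 V // e ∈ E} → Bool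

/-- Full bond configurations: internal edges together with the ghost edges
(one for each vertex). -/
abbrev GConfig (E : Finset (Sym2 V)) : Type _ := Config E × (V → Bool)

/-- Two vertices are adjacent if they are distinct and joined by an open internal edge. -/
def adj (E : Finset (Sym2 V)) (ω : Config E) (u v : V) : Prop :=
  u ≠ v ∧ ∃ h : s(u, v) ∈ E, ω ⟨s(u, v), h⟩ = true

/-- The same-cluster relation of an internal configuration. -/
def conn (E : Finset (Sym2 V)) (ω : Config E) (u v : V) : Prop :=
  Relation.ReflTransGen (adj E ω) u v

/-- The cluster of a vertex. -/
noncomputable def cluster (E : Finset (Sym2 V)) (ω : Config E) (v : V) : Finset V :=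
  Finset.univ.filter (fun u => conn E ω v u)

/-- The set of clusters (connected components) of an internal configuration. -/
noncomputable def clusters (E : Finset (Sym2 V)) (ω : Config E) : Finset (Finset V) :=
  Finset.univ.image (cluster E ω)

/-- Adjacency in the extended graph, where `none` is the ghost vertex `g`. -/
def adjG (E : Finset (Sym2 V)) (ω : GConfig E) : Option V → Option V → Prop
  | some u, some v => adj E ω.1 u v
  | some u, none => ω.2 u = true
  | none, some v => ω.2 v = true
  | none, none => False

/-- Connectivity in the extended graph (with the ghost vertex `none`). -/
def connG (E : Finset (Sym2 V)) (ω : GConfig E) (x y : Option V) : Prop :=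
  Relation.ReflTransGen (adjG E ω) x y

/-- Number of connected components of the extended graph not containing the ghost. -/
noncomputable def kGhost (E : Finset (Sym2 V)) (ω : GConfig E) : ℕ :=
  (((Finset.univ : Finset V).filter (fun v => ¬ connG E ω (some v) none)).image
    (fun v => Finset.univ.filter (fun u : V => connG E ω (some v) (some u)))).card

/-- The product over internal edges of the usual FK edge weights. -/
noncomputable def edgeWeight (J : Sym2 V → ℝ) (E : Finset (Sym2 V)) (ω : Config E) : ℝ :=
  ∏ e : {e : Sym2 V // e ∈ E},
    if ω e then 1 - Real.exp (-2 * J e.1) else Real.exp (-2 * J e.1)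

/-- Unnormalized FK (q = 2) weight with ghost. -/
noncomputable def fkWeight (J : Sym2 V → ℝ) (H : V → ℝ) (E : Finset (Sym2 V))
    (ω : GConfig E) : ℝ :=
  2 ^ kGhost E ω * edgeWeight J E ω.1 *
    ∏ v, if ω.2 v then 1 - Real.exp (-2 * H v) else Real.exp (-2 * H v)

/-- The FK (q = 2) random-cluster measure with ghost. -/
noncomputable def fkProb (J : Sym2 V → ℝ) (H : V → ℝ) (E : Finset (Sym2 V))
    (ω : GConfig E) : ℝ :=
  fkWeight J H E ω / ∑ ω' : GConfig E, fkWeight J H E ω'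

/-- The marginal of the FK measure with ghost on the internal edges. -/
noncomputable def fkMarginal (J : Sym2 V → ℝ) (H : V → ℝ) (E : Finset (Sym2 V))
    (ωi : Config E) : ℝ :=
  ∑ ωg : V → Bool, fkProb J H E (ωi, ωg)

/-- Unnormalized zero-field random-cluster (q = 2) weight. -/
noncomputable def rcWeight (J : Sym2 V → ℝ) (E : Finset (Sym2 V)) (ω : Config E) : ℝ :=
  2 ^ (clusters E ω).card * edgeWeight J E ω

/-- The zero-field random-cluster (q = 2) measure. -/
noncomputable def rcProb (J : Sym2 V → ℝ) (E : Finset (Sym2 V)) (ω : Config E) : ℝ :=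
  rcWeight J E ω / ∑ ω' : Config E, rcWeight J E ω'

/-- The spin value (±1) of a Boolean. -/
def spin (b : Bool) : ℝ := if b then 1 else -1

/-- The product of the two spins at the endpoints of an (unordered) edge. -/
def pairSpin (σ : V → Bool) : Sym2 V → ℝ :=
  Sym2.lift ⟨fun u v => spin (σ u) * spin (σ v), fun u v => mul_comm _ _⟩

/-- Unnormalized Ising weight. -/
noncomputable def isingWeight (J : Sym2 V → ℝ) (H : V → ℝ) (E : Finset (Sym2 V))
    (σ : V → Bool) : ℝ :=
  Real.exp ((∑ e ∈ E, J e * pairSpin σ e) + ∑ v, H v * spin (σ v))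

/-- The Ising Gibbs measure. -/
noncomputable def isingProb (J : Sym2 V → ℝ) (H : V → ℝ) (E : Finset (Sym2 V))
    (σ : V → Bool) : ℝ :=
  isingWeight J H E σ / ∑ σ' : V → Bool, isingWeight J H E σ'

/-- Unnormalized Edwards–Sokal weight on pairs (spin configuration, bond configuration
with ghost); the ghost spin is `+1` (i.e. `true`). -/
noncomputable def esWeight (J : Sym2 V → ℝ) (H : V → ℝ) (E : Finset (Sym2 V))
    (p : (V → Bool) × GConfig E) : ℝ :=
  (∏ e : {e : Sym2 V // e ∈ E},
      if p.2.1 e then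
        (if ∀ u ∈ e.1, ∀ v ∈ e.1, p.1 u = p.1 v then 1 - Real.exp (-2 * J e.1) else 0)
      else Real.exp (-2 * J e.1))
  * ∏ v, if p.2.2 v then (if p.1 v = true then 1 - Real.exp (-2 * H v) else 0)
         else Real.exp (-2 * H v)

/-- The Edwards–Sokal coupling measure. -/
noncomputable def esProb (J : Sym2 V → ℝ) (H : V → ℝ) (E : Finset (Sym2 V))
    (p : (V → Bool) × GConfig E) : ℝ :=
  esWeight J H E p / ∑ p' : (V → Bool) × GConfig E, esWeight J H E p'

end FK
namespace FKAux
open FK Finset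

variable {V : Type*} [Fintype V] [DecidableEq V] {E : Finset (Sym2 V)}

lemma prod_bool_sum {ι : Type*} [Fintype ι] [DecidableEq ι] (g : ι → Bool → ℝ) :
    (∏ i, (g i true + g i false)) = ∑ f : ι → Bool, ∏ i, g i (f i) := by
  have := Finset.prod_univ_sum (fun _ : ι => (Finset.univ : Finset Bool)) (fun i b => g i b)
  rw [Fintype.piFinset_univ] at this
  simpa [Fintype.sum_bool] using this

lemma adj_symm (E : Finset (Sym2 V)) (ω : Config E) : Symmetric (adj E ω) := by
  rintro u v ⟨hne, he, hω⟩
  refine ⟨hne.symm, ?_⟩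
  rw [Sym2.eq_swap]
  exact ⟨he, hω⟩

lemma conn_symm {ω : Config E} {u v : V} (h : conn E ω u v) : conn E ω v u :=
  by
    induction h with
    | refl => exact Relation.ReflTransGen.refl
    | tail _ hbc ih => exact Relation.ReflTransGen.head (adj_symm E ω hbc) ih

lemma mem_cluster {ω : Config E} {v u : V} : u ∈ cluster E ω v ↔ conn E ω v u := by
  simp [cluster]

lemma self_mem_cluster {ω : Config E} {v : V} : v ∈ cluster E ω v :=
  mem_cluster.2 Relation.ReflTransGen.refl

lemma cluster_eq_of_conn {ω : Config E} {u v : V} (h : conn E ω u v) :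
    cluster E ω u = cluster E ω v := by
  ext w
  simp only [mem_cluster]
  exact ⟨fun hw => (conn_symm h).trans hw, fun hw => h.trans hw⟩

lemma mem_clusters {ω : Config E} {C : Finset V} :
    C ∈ clusters E ω ↔ ∃ v, cluster E ω v = C := by
  simp [clusters]

noncomputable def compatSet (E : Finset (Sym2 V)) (ω : Config E) : Finset (V → Bool) :=
  Finset.univ.filter (fun σ => ∀ u v, conn E ω u v → σ u = σ v)

lemma mem_compatSet {ω : Config E} {σ : V → Bool} :
    σ ∈ compatSet E ω ↔ ∀ u v, conn E ω u v → σ u = σ v := by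
  simp [compatSet]

end FKAux
section Chunk2
open FK Finset
set_option linter.unusedSectionVars false
variable {V : Type*} [Fintype V] [DecidableEq V] {E : Finset (Sym2 V)}
open FKAux

lemma core_count (E : Finset (Sym2 V)) (ω : Config E) (τ : V → Bool) :
    ((compatSet E ω).filter (fun σ => ∀ v, τ v = true → σ v = true)).card
      = 2 ^ (((clusters E ω).filter (fun C => ∀ u ∈ C, τ u = false)).card) := by
  set good : Finset (Finset V) :=
    (clusters E ω).filter (fun C => ∀ u ∈ C, τ u = false) with hgood
  -- representative vertex of a cluster
  have hrep : ∀ C ∈ clusters E ω, ∃ v, cluster E ω v = C := fun C hC => mem_clusters.1 hC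
  let rep : {C // C ∈ good} → V := fun C =>
    (hrep C.1 (Finset.mem_of_mem_filter _ C.2)).choose
  have hrepc : ∀ C : {C // C ∈ good}, cluster E ω (rep C) = C.1 := fun C =>
    (hrep C.1 (Finset.mem_of_mem_filter _ C.2)).choose_spec
  rw [show (2 ^ good.card) = (Finset.univ : Finset ({C // C ∈ good} → Bool)).card by
    simp [Finset.card_univ]]
  apply Finset.card_bij'
    (i := fun σ _ => fun C => σ (rep C))
    (j := fun f _ => fun v =>
      if h : cluster E ω v ∈ good then f ⟨cluster E ω v, h⟩ else true)
  · intro σ hσ; exact Finset.mem_univ _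
  · -- j maps into the filtered set
    intro f _
    rw [Finset.mem_filter]
    constructor
    · rw [mem_compatSet]
      intro u v huv
      have hc : cluster E ω u = cluster E ω v := cluster_eq_of_conn huv
      simp only [hc]
    · intro v hv
      show (if h : cluster E ω v ∈ good then f ⟨cluster E ω v, h⟩ else true) = true
      rw [dif_neg]
      intro hmem
      have := (Finset.mem_filter.1 hmem).2 v self_mem_cluster
      rw [hv] at this; simp at this
  · -- left inverse
    intro σ hσ
    obtain ⟨hσc, hσf⟩ := Finset.mem_filter.1 hσ
    rw [mem_compatSet] at hσc
    funext v
    by_cases hg : cluster E ω v ∈ good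
    · rw [dif_pos hg]
      have hconn : conn E ω v (rep ⟨cluster E ω v, hg⟩) := by
        have := hrepc ⟨cluster E ω v, hg⟩
        have : v ∈ cluster E ω (rep ⟨cluster E ω v, hg⟩) := this.symm ▸ self_mem_cluster
        exact conn_symm (mem_cluster.1 this)
      exact (hσc _ _ hconn).symm
    · rw [dif_neg hg]
      -- cluster v not good: some u in cluster v with τ u = true
      have hcl : cluster E ω v ∈ clusters E ω := mem_clusters.2 ⟨v, rfl⟩
      have : ∃ u ∈ cluster E ω v, τ u = true := by
        by_contra hcon
        push_neg at hcon
        exact hg (Finset.mem_filter.2 ⟨hcl, fun u hu => by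
          have := hcon u hu; exact Bool.not_eq_true _ ▸ by simpa using this⟩)
      obtain ⟨u, hu, hτu⟩ := this
      have : σ u = true := hσf u hτu
      rw [← hσc v u (mem_cluster.1 hu)] at this
      exact this.symm
  · -- right inverse
    intro f _
    funext C
    have hc : cluster E ω (rep C) = C.1 := hrepc C
    simp only [hc, dif_pos C.2]
end Chunk2
section Chunk3
open FK Finset FKAux
set_option linter.unusedSectionVars false
variable {V : Type*} [Fintype V] [DecidableEq V] {E : Finset (Sym2 V)}

lemma connG_of_conn {ω : GConfig E} {u v : V} (h : conn E ω.1 u v) :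
    connG E ω (some u) (some v) :=
  by
    induction h with
    | refl => exact Relation.ReflTransGen.refl
    | tail _ hbc ih => exact Relation.ReflTransGen.tail ih hbc

lemma connG_classify {ω : GConfig E} {v : V} {z : Option V}
    (h : connG E ω (some v) z) :
    (∃ u, conn E ω.1 v u ∧ z = some u) ∨ (∃ w, conn E ω.1 v w ∧ ω.2 w = true) := by
  induction h with
  | refl => exact Or.inl ⟨v, Relation.ReflTransGen.refl, rfl⟩
  | @tail b c hab step ih =>
    rcases ih with ⟨u, hu, rfl⟩ | hr
    · cases c with
      | none => exact Or.inr ⟨u, hu, step⟩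
      | some u' => exact Or.inl ⟨u', hu.tail step, rfl⟩
    · exact Or.inr hr

lemma connG_some_none_iff {ω : GConfig E} {v : V} :
    connG E ω (some v) none ↔ ∃ u, conn E ω.1 v u ∧ ω.2 u = true := by
  constructor
  · intro h
    rcases connG_classify h with ⟨u, _, hu⟩ | hr
    · exact absurd hu (by simp)
    · exact hr
  · rintro ⟨u, hc, hg⟩
    exact (connG_of_conn hc).tail hg

lemma kGhost_eq (ω : GConfig E) :
    kGhost E ω = ((clusters E ω.1).filter (fun C => ∀ u ∈ C, ω.2 u = false)).card := by
  unfold kGhost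
  congr 1
  ext C
  simp only [Finset.mem_image, Finset.mem_filter, Finset.mem_univ, true_and]
  constructor
  · rintro ⟨v, hv, rfl⟩
    have huntouched : ¬ ∃ u, conn E ω.1 v u ∧ ω.2 u = true := by
      rwa [← connG_some_none_iff]
    have hflt : (Finset.univ.filter (fun u : V => connG E ω (some v) (some u)))
        = cluster E ω.1 v := by
      ext u
      simp only [Finset.mem_filter, Finset.mem_univ, true_and, mem_cluster]
      constructor
      · intro h
        rcases connG_classify h with ⟨u', hc, hu⟩ | hr
        · obtain rfl : u = u' := by simpa using hu
          exact hc
        · exact absurd hr huntouched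
      · exact connG_of_conn
    rw [hflt]
    refine ⟨mem_clusters.2 ⟨v, rfl⟩, fun u hu => ?_⟩
    by_contra hne
    have : ω.2 u = true := by simpa using hne
    exact huntouched ⟨u, mem_cluster.1 hu, this⟩
  · rintro ⟨hC, hfree⟩
    obtain ⟨v, rfl⟩ := mem_clusters.1 hC
    have huntouched : ¬ connG E ω (some v) none := by
      rw [connG_some_none_iff]
      rintro ⟨u, hc, hg⟩
      have := hfree u (mem_cluster.2 hc)
      rw [this] at hg; simp at hg
    refine ⟨v, huntouched, ?_⟩
    ext u
    simp only [Finset.mem_filter, Finset.mem_univ, true_and, mem_cluster]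
    constructor
    · intro h
      rcases connG_classify h with ⟨u', hc, hu⟩ | hr
      · obtain rfl : u = u' := by simpa using hu
        exact hc
      · exact absurd (connG_some_none_iff.2 hr) huntouched
    · exact connG_of_conn
end Chunk3
section Chunk4
open FK Finset FKAux
set_option linter.unusedSectionVars false
variable {V : Type*} [Fintype V] [DecidableEq V] {E : Finset (Sym2 V)}

lemma indicator_prod_eq (q : ℝ) (σ ωg : V → Bool) :
    (if (∀ v, ωg v = true → σ v = true) then
        ∏ v, (if ωg v then 1 - q else q) else 0)
      = ∏ v, (if ωg v then (if σ v then 1 - q else 0) else q) := by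
  by_cases hc : ∀ v, ωg v = true → σ v = true
  · rw [if_pos hc]
    refine Finset.prod_congr rfl fun v _ => ?_
    by_cases hω : ωg v
    · simp [hω, hc v hω]
    · simp [hω]
  · rw [if_neg hc]
    push_neg at hc
    obtain ⟨v, hv, hσ⟩ := hc
    refine (Finset.prod_eq_zero (Finset.mem_univ v) ?_).symm
    have : σ v = false := by simpa using hσ
    simp [hv, this]

lemma fk_sum (J : Sym2 V → ℝ) (h : ℝ) (ω : Config E) :
    ∑ ωg : V → Bool, fkWeight J (fun _ => h) E (ω, ωg)
      = edgeWeight J E ω *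
        ∑ σ ∈ compatSet E ω, ∏ v, (if σ v then (1:ℝ) else Real.exp (-2*h)) := by
  have step1 : ∀ ωg : V → Bool,
      fkWeight J (fun _ => h) E (ω, ωg)
        = edgeWeight J E ω *
          ∑ σ ∈ compatSet E ω,
            (if (∀ v, ωg v = true → σ v = true) then
              ∏ v, (if ωg v then 1 - Real.exp (-2*h) else Real.exp (-2*h)) else 0) := by
    intro ωg
    rw [← Finset.sum_filter, Finset.sum_const, nsmul_eq_mul, core_count E ω ωg]
    have hk : kGhost E (ω, ωg)
        = ((clusters E ω).filter (fun C => ∀ u ∈ C, ωg u = false)).card :=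
      kGhost_eq (ω, ωg)
    show (2:ℝ) ^ kGhost E (ω, ωg) * edgeWeight J E ω *
        (∏ v, (if ωg v then 1 - Real.exp (-2*h) else Real.exp (-2*h))) = _
    rw [hk]
    push_cast
    ring
  rw [Finset.sum_congr rfl (fun ωg _ => step1 ωg), ← Finset.mul_sum, Finset.sum_comm]
  congr 1
  refine Finset.sum_congr rfl fun σ _ => ?_
  rw [Finset.sum_congr rfl (fun ωg _ => indicator_prod_eq (Real.exp (-2*h)) σ ωg),
    ← prod_bool_sum
      (fun v b => if b then (if σ v then 1 - Real.exp (-2*h) else 0) else Real.exp (-2*h))]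
  refine Finset.prod_congr rfl fun v _ => ?_
  by_cases hσ : σ v <;> simp [hσ]
end Chunk4
section Chunk5
open FK Finset FKAux
set_option linter.unusedSectionVars false
variable {V : Type*} [Fintype V] [DecidableEq V] {E : Finset (Sym2 V)}

lemma compat_iff_edges (ω : Config E) (σ : V → Bool) :
    (∀ u v, conn E ω u v → σ u = σ v) ↔
      ∀ e : {e : Sym2 V // e ∈ E}, ω e = true → ∀ u ∈ e.1, ∀ v ∈ e.1, σ u = σ v := by
  constructor
  · intro hc e he u hu v hv
    rcases eq_or_ne u v with rfl | hne
    · rfl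
    · have hz : e.1 = s(u, v) := (Sym2.mem_and_mem_iff hne).1 ⟨hu, hv⟩
      have hmem : s(u, v) ∈ E := hz ▸ e.2
      have he' : ω ⟨s(u, v), hmem⟩ = true := by
        have : (⟨s(u, v), hmem⟩ : {e : Sym2 V // e ∈ E}) = e := Subtype.ext hz.symm
        rw [this]; exact he
      exact hc u v (Relation.ReflTransGen.single ⟨hne, hmem, he'⟩)
  · intro he u v hc
    induction hc with
    | refl => rfl
    | @tail b c hab step ih =>
      obtain ⟨hne, hmem, hω⟩ := step
      exact ih.trans (he ⟨s(b, c), hmem⟩ hω b (Sym2.mem_mk_left b c) c (Sym2.mem_mk_right b c))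

lemma exp_J_pairSpin (J : Sym2 V → ℝ) {e : Sym2 V} (he : ¬ e.IsDiag) (σ : V → Bool) :
    Real.exp (J e * pairSpin σ e)
      = Real.exp (J e) *
        ((if ∀ u ∈ e, ∀ v ∈ e, σ u = σ v then 1 - Real.exp (-2 * J e) else 0)
          + Real.exp (-2 * J e)) := by
  induction e using Sym2.ind with
  | _ a b =>
    have hab : a ≠ b := by simpa [Sym2.mk_isDiag_iff] using he
    have hsame : (∀ u ∈ s(a, b), ∀ v ∈ s(a, b), σ u = σ v) ↔ σ a = σ b := by
      constructor
      · intro H; exact H a (Sym2.mem_mk_left a b) b (Sym2.mem_mk_right a b)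
      · intro H u hu v hv
        rcases Sym2.mem_iff.1 hu with rfl | rfl <;> rcases Sym2.mem_iff.1 hv with rfl | rfl <;>
          first | rfl | exact H | exact H.symm
    have hps : pairSpin σ s(a, b) = spin (σ a) * spin (σ b) := Sym2.lift_mk _ a b
    by_cases hs : σ a = σ b
    · have h1 : pairSpin σ s(a, b) = 1 := by
        rw [hps, hs]; cases σ b <;> simp [spin]
      rw [h1, if_pos (hsame.2 hs)]
      ring_nf
    · have h1 : pairSpin σ s(a, b) = -1 := by
        rw [hps]; cases hσa : σ a <;> cases hσb : σ b <;>
          simp_all [spin]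
      rw [h1, if_neg (fun hh => hs (hsame.1 hh))]
      rw [zero_add, ← Real.exp_add]
      ring_nf
end Chunk5
section Chunk6
open FK Finset FKAux
set_option linter.unusedSectionVars false
variable {V : Type*} [Fintype V] [DecidableEq V] {E : Finset (Sym2 V)}

lemma prod_add_sum {ι : Type*} [Fintype ι] [DecidableEq ι] (A B : ι → ℝ) :
    (∏ i, (A i + B i)) = ∑ f : ι → Bool, ∏ i, (if f i then A i else B i) := by
  have := prod_bool_sum (fun i b => if b then A i else B i)
  simpa using this

lemma prod_g_eq (J : Sym2 V → ℝ) (ω : Config E) (σ : V → Bool) :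
    (∏ e : {e : Sym2 V // e ∈ E},
        (if ω e then (if ∀ u ∈ e.1, ∀ v ∈ e.1, σ u = σ v then 1 - Real.exp (-2 * J e.1) else 0)
          else Real.exp (-2 * J e.1)))
      = (if σ ∈ compatSet E ω then 1 else 0) * edgeWeight J E ω := by
  by_cases hc : σ ∈ compatSet E ω
  · rw [if_pos hc, one_mul]
    have hedges := (compat_iff_edges ω σ).1 (mem_compatSet.1 hc)
    unfold edgeWeight
    refine Finset.prod_congr rfl fun e _ => ?_
    by_cases hω : ω e
    · rw [if_pos hω, if_pos hω, if_pos (hedges e hω)]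
    · rw [if_neg hω, if_neg hω]
  · rw [if_neg hc, zero_mul]
    have hne : ¬ ∀ e : {e : Sym2 V // e ∈ E}, ω e = true →
        ∀ u ∈ e.1, ∀ v ∈ e.1, σ u = σ v :=
      fun hh => hc (mem_compatSet.2 ((compat_iff_edges ω σ).2 hh))
    obtain ⟨e, hne⟩ := not_forall.1 hne
    rw [Classical.not_imp] at hne
    obtain ⟨he, hsame⟩ := hne
    apply Finset.prod_eq_zero (Finset.mem_univ e)
    rw [if_pos he, if_neg hsame]

lemma ising_sum (hE : ∀ e ∈ E, ¬ e.IsDiag) (J : Sym2 V → ℝ) (H : V → ℝ) :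
    ∑ σ : V → Bool, isingWeight J H E σ
      = (∏ e : {e : Sym2 V // e ∈ E}, Real.exp (J e.1)) *
        ∑ ω : Config E, edgeWeight J E ω *
          ∑ σ ∈ compatSet E ω, Real.exp (∑ v, H v * spin (σ v)) := by
  have stepA : ∀ σ : V → Bool, isingWeight J H E σ
      = ∑ ω : Config E, (∏ e : {e : Sym2 V // e ∈ E}, Real.exp (J e.1)) *
          ((if σ ∈ compatSet E ω then 1 else 0) *
            (edgeWeight J E ω * Real.exp (∑ v, H v * spin (σ v)))) := by
    intro σ
    have h1 : isingWeight J H E σ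
        = (∏ e : {e : Sym2 V // e ∈ E}, Real.exp (J e.1 * pairSpin σ e.1)) *
          Real.exp (∑ v, H v * spin (σ v)) := by
      unfold isingWeight
      rw [Real.exp_add]
      congr 1
      rw [← Finset.sum_coe_sort E (fun e => J e * pairSpin σ e), Real.exp_sum]
    have h2 : (∏ e : {e : Sym2 V // e ∈ E}, Real.exp (J e.1 * pairSpin σ e.1))
        = (∏ e : {e : Sym2 V // e ∈ E}, Real.exp (J e.1)) *
          ∑ ω : Config E, (if σ ∈ compatSet E ω then 1 else 0) * edgeWeight J E ω := by
      calc (∏ e : {e : Sym2 V // e ∈ E}, Real.exp (J e.1 * pairSpin σ e.1))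
          = ∏ e : {e : Sym2 V // e ∈ E}, Real.exp (J e.1) *
              ((if ∀ u ∈ e.1, ∀ v ∈ e.1, σ u = σ v then 1 - Real.exp (-2 * J e.1) else 0)
                + Real.exp (-2 * J e.1)) :=
            Finset.prod_congr rfl fun e _ => exp_J_pairSpin J (hE e.1 e.2) σ
        _ = (∏ e : {e : Sym2 V // e ∈ E}, Real.exp (J e.1)) *
              ∏ e : {e : Sym2 V // e ∈ E},
                ((if ∀ u ∈ e.1, ∀ v ∈ e.1, σ u = σ v then 1 - Real.exp (-2 * J e.1) else 0)
                  + Real.exp (-2 * J e.1)) := Finset.prod_mul_distrib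
        _ = _ := by
            rw [prod_add_sum]
            congr 1
            exact Finset.sum_congr rfl fun ω _ => prod_g_eq J ω σ
    rw [h1, h2, mul_assoc, Finset.sum_mul, Finset.mul_sum]
    exact Finset.sum_congr rfl fun ω _ => by ring
  rw [Finset.sum_congr rfl (fun σ _ => stepA σ), Finset.sum_comm, Finset.mul_sum]
  refine Finset.sum_congr rfl fun ω _ => ?_
  rw [← Finset.mul_sum]
  congr 1
  rw [Finset.mul_sum]
  rw [Finset.sum_congr rfl (fun σ _ => (boole_mul _ _).trans rfl)]
  rw [Finset.sum_ite_mem, Finset.univ_inter]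
end Chunk6
section Chunk7
open FK Finset FKAux
set_option linter.unusedSectionVars false
variable {V : Type*} [Fintype V] [DecidableEq V] {E : Finset (Sym2 V)}

lemma spin_not (b : Bool) : spin (!b) = - spin b := by cases b <;> simp [spin]

lemma exp_spin_prod (h : ℝ) (σ : V → Bool) :
    Real.exp (∑ v, h * spin (σ v))
      = Real.exp (h * Fintype.card V) *
        ∏ v, (if σ v then (1:ℝ) else Real.exp (-2*h)) := by
  have key : ∀ v : V, (if σ v then (1:ℝ) else Real.exp (-2*h))
      = Real.exp (h * spin (σ v) - h) := by
    intro v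
    cases hv : σ v
    · rw [if_neg (by simp [hv])]
      congr 1
      simp [spin]; ring
    · rw [if_pos (by simp [hv])]
      rw [show h * spin true - h = 0 by simp [spin]]
      simp
  rw [Finset.prod_congr rfl (fun v _ => key v), ← Real.exp_sum, ← Real.exp_add]
  congr 1
  rw [Finset.sum_sub_distrib, Finset.sum_const, Finset.card_univ, nsmul_eq_mul]
  ring

lemma const_true_mem_compatSet (ω : Config E) : (fun _ => true) ∈ compatSet E ω :=
  mem_compatSet.2 fun _ _ _ => rfl

lemma sum_exp_ge_card (ω : Config E) (h : ℝ) :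
    ((compatSet E ω).card : ℝ)
      ≤ ∑ σ ∈ compatSet E ω, Real.exp (∑ v, h * spin (σ v)) := by
  have hflip : ∀ σ : V → Bool, σ ∈ compatSet E ω → (fun v => !(σ v)) ∈ compatSet E ω := by
    intro σ hσ
    rw [mem_compatSet] at *
    intro u v hc
    rw [hσ u v hc]
  have hinv : ∑ σ ∈ compatSet E ω, Real.exp (∑ v, h * spin (!(σ v)))
      = ∑ σ ∈ compatSet E ω, Real.exp (∑ v, h * spin (σ v)) := by
    refine Finset.sum_nbij' (i := fun σ => fun v => !(σ v)) (j := fun σ => fun v => !(σ v))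
      ?_ ?_ ?_ ?_ ?_
    · intro σ hσ; exact hflip σ hσ
    · intro σ hσ; exact hflip σ hσ
    · intro σ _; funext v; simp
    · intro σ _; funext v; simp
    · intro σ _; rfl
  have pair : ∀ σ : V → Bool,
      (2:ℝ) ≤ Real.exp (∑ v, h * spin (σ v)) + Real.exp (∑ v, h * spin (!(σ v))) := by
    intro σ
    have hneg : (∑ v, h * spin (!(σ v))) = - ∑ v, h * spin (σ v) := by
      rw [← Finset.sum_neg_distrib]
      refine Finset.sum_congr rfl fun v _ => ?_
      rw [spin_not]; ring
    rw [hneg]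
    have h1 := Real.add_one_le_exp (∑ v, h * spin (σ v))
    have h2 := Real.add_one_le_exp (-∑ v, h * spin (σ v))
    linarith
  have htwo : 2 * ((compatSet E ω).card : ℝ)
      ≤ 2 * ∑ σ ∈ compatSet E ω, Real.exp (∑ v, h * spin (σ v)) := by
    calc 2 * ((compatSet E ω).card : ℝ) = ∑ _σ ∈ compatSet E ω, (2:ℝ) := by
          rw [Finset.sum_const, nsmul_eq_mul]; ring
      _ ≤ ∑ σ ∈ compatSet E ω,
            (Real.exp (∑ v, h * spin (σ v)) + Real.exp (∑ v, h * spin (!(σ v)))) :=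
          Finset.sum_le_sum fun σ _ => pair σ
      _ = 2 * ∑ σ ∈ compatSet E ω, Real.exp (∑ v, h * spin (σ v)) := by
          rw [Finset.sum_add_distrib, hinv]; ring
  linarith

lemma edgeWeight_nonneg (J : Sym2 V → ℝ) (hJ : ∀ e ∈ E, 0 ≤ J e) (ω : Config E) :
    0 ≤ edgeWeight J E ω := by
  refine Finset.prod_nonneg fun e _ => ?_
  by_cases hω : ω e
  · rw [if_pos hω]
    have : Real.exp (-2 * J e.1) ≤ 1 :=
      Real.exp_le_one_iff.2 (by have := hJ e.1 e.2; linarith)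
    linarith
  · rw [if_neg hω]
    exact (Real.exp_pos _).le

lemma edgeWeight_false_pos (J : Sym2 V → ℝ) :
    0 < edgeWeight J E (fun _ => false) := by
  refine Finset.prod_pos fun e _ => ?_
  simp only [if_neg]
  exact Real.exp_pos _

lemma prodIf_pos (h : ℝ) (σ : V → Bool) :
    0 < ∏ v, (if σ v then (1:ℝ) else Real.exp (-2*h)) := by
  refine Finset.prod_pos fun v _ => ?_
  by_cases hσ : σ v
  · rw [if_pos hσ]; norm_num
  · rw [if_neg hσ]; exact Real.exp_pos _
end Chunk7
section Chunk8
open FK Finset FKAux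
set_option linter.unusedSectionVars false
variable {V : Type*} [Fintype V] [DecidableEq V] {E : Finset (Sym2 V)}

noncomputable def Wfun (J : Sym2 V → ℝ) (h : ℝ) (E : Finset (Sym2 V)) (ω : FK.Config E) : ℝ :=
  edgeWeight J E ω * ∑ σ ∈ compatSet E ω, ∏ v, (if σ v then (1:ℝ) else Real.exp (-2*h))

lemma fk_sum' (J : Sym2 V → ℝ) (h : ℝ) (ω : Config E) :
    ∑ ωg : V → Bool, fkWeight J (fun _ => h) E (ω, ωg) = Wfun J h E ω :=
  fk_sum J h ω

lemma Wfun_nonneg (J : Sym2 V → ℝ) (hJ : ∀ e ∈ E, 0 ≤ J e) (h : ℝ) (ω : Config E) :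
    0 ≤ Wfun J h E ω :=
  mul_nonneg (edgeWeight_nonneg J hJ ω)
    (Finset.sum_nonneg fun σ _ => (prodIf_pos h σ).le)

lemma Wfun_false_pos (J : Sym2 V → ℝ) (h : ℝ) :
    0 < Wfun J h E (fun _ => false) :=
  mul_pos (edgeWeight_false_pos J)
    (Finset.sum_pos (fun σ _ => prodIf_pos h σ)
      ⟨fun _ => true, const_true_mem_compatSet _⟩)

lemma card_compatSet_eq (J : Sym2 V → ℝ) (ω : Config E) :
    ((compatSet E ω).card : ℝ) = (2:ℝ) ^ (clusters E ω).card := by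
  have := core_count E ω (fun _ => false)
  rw [Finset.filter_true_of_mem (fun σ _ => by simp),
    Finset.filter_true_of_mem (fun C _ => by simp)] at this
  rw [this]
  push_cast
  ring

lemma rcWeight_eq_card (J : Sym2 V → ℝ) (ω : Config E) :
    rcWeight J E ω = ((compatSet E ω).card : ℝ) * edgeWeight J E ω := by
  rw [rcWeight, card_compatSet_eq J ω]

lemma sum_compat_exp (h : ℝ) (ω : Config E) :
    ∑ σ ∈ compatSet E ω, Real.exp (∑ v, h * spin (σ v))
      = Real.exp (h * Fintype.card V) *
        ∑ σ ∈ compatSet E ω, ∏ v, (if σ v then (1:ℝ) else Real.exp (-2*h)) := by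
  rw [Finset.mul_sum]
  exact Finset.sum_congr rfl fun σ _ => exp_spin_prod h σ

lemma rcWeight_le_Wfun (J : Sym2 V → ℝ) (hJ : ∀ e ∈ E, 0 ≤ J e) (h : ℝ) (ω : Config E) :
    rcWeight J E ω ≤ Real.exp (h * Fintype.card V) * Wfun J h E ω := by
  rw [rcWeight_eq_card J ω]
  have h1 : Real.exp (h * Fintype.card V) * Wfun J h E ω
      = edgeWeight J E ω * ∑ σ ∈ compatSet E ω, Real.exp (∑ v, h * spin (σ v)) := by
    rw [sum_compat_exp, Wfun]; ring
  rw [h1, mul_comm]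
  exact mul_le_mul_of_nonneg_left (sum_exp_ge_card ω h) (edgeWeight_nonneg J hJ ω)

lemma ising_sum_zero (hE : ∀ e ∈ E, ¬ e.IsDiag) (J : Sym2 V → ℝ) :
    ∑ σ : V → Bool, isingWeight J (fun _ => 0) E σ
      = (∏ e : {e : Sym2 V // e ∈ E}, Real.exp (J e.1)) * ∑ ω : Config E, rcWeight J E ω := by
  rw [ising_sum hE J (fun _ => 0)]
  congr 1
  refine Finset.sum_congr rfl fun ω _ => ?_
  rw [rcWeight_eq_card J ω, mul_comm]
  congr 1
  have : ∀ σ : V → Bool, Real.exp (∑ v, (fun _ => (0:ℝ)) v * spin (σ v)) = 1 := by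
    intro σ; simp
  rw [Finset.sum_congr rfl fun σ _ => this σ, Finset.sum_const, nsmul_eq_mul, mul_one]

lemma ising_sum_h (hE : ∀ e ∈ E, ¬ e.IsDiag) (J : Sym2 V → ℝ) (h : ℝ) :
    ∑ σ : V → Bool, isingWeight J (fun _ => h) E σ
      = (∏ e : {e : Sym2 V // e ∈ E}, Real.exp (J e.1)) *
        (Real.exp (h * Fintype.card V) * ∑ ω : Config E, Wfun J h E ω) := by
  rw [ising_sum hE J (fun _ => h)]
  congr 1
  rw [Finset.mul_sum]
  refine Finset.sum_congr rfl fun ω _ => ?_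
  have : ∑ σ ∈ compatSet E ω, Real.exp (∑ v, (fun _ => h) v * spin (σ v))
      = Real.exp (h * Fintype.card V) *
        ∑ σ ∈ compatSet E ω, ∏ v, (if σ v then (1:ℝ) else Real.exp (-2*h)) :=
    sum_compat_exp h ω
  rw [this, Wfun]
  ring
end Chunk8
section Final
open FK FKAux Finset

/-- lower bound for FK probabilities under a magnetic field. -/
theorem fk_lower_bound_with_field
    {V : Type*} [Fintype V] [DecidableEq V]
    (E : Finset (Sym2 V)) (hE : ∀ e ∈ E, ¬ e.IsDiag)
    (J : Sym2 V → ℝ) (hJ : ∀ e ∈ E, 0 ≤ J e)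
    (h : ℝ) (hh : 0 ≤ h) (A : Finset (FK.Config E)) :
    (∑ ωi ∈ A, FK.fkMarginal J (fun _ => h) E ωi)
      ≥ (∑ ωi ∈ A, FK.rcProb J E ωi)
        / ∑ σ : V → Bool, FK.isingProb J (fun _ => 0) E σ *
            Real.exp (h * ∑ v, FK.spin (σ v)) := by
  classical
  set n : ℕ := Fintype.card V with hn
  set cE : ℝ := ∏ e : {e : Sym2 V // e ∈ E}, Real.exp (J e.1) with hcE
  set SW : ℝ := ∑ ω : Config E, Wfun J h E ω with hSWdef
  set SR : ℝ := ∑ ω : Config E, rcWeight J E ω with hSRdef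
  set Z0 : ℝ := ∑ σ : V → Bool, isingWeight J (fun _ => 0) E σ with hZ0def
  have hcEpos : 0 < cE := Finset.prod_pos fun e _ => Real.exp_pos _
  have hSWpos : 0 < SW :=
    Finset.sum_pos' (fun ω _ => Wfun_nonneg J hJ h ω)
      ⟨fun _ => false, Finset.mem_univ _, Wfun_false_pos J h⟩
  have hSRpos : 0 < SR := by
    refine Finset.sum_pos' (fun ω _ => ?_) ⟨fun _ => false, Finset.mem_univ _, ?_⟩
    · rw [rcWeight_eq_card]
      exact mul_nonneg (Nat.cast_nonneg _) (edgeWeight_nonneg J hJ ω)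
    · rw [rcWeight_eq_card]
      refine mul_pos ?_ (edgeWeight_false_pos J)
      exact_mod_cast Finset.card_pos.2 ⟨fun _ => true, const_true_mem_compatSet _⟩
  have hZ0eq : Z0 = cE * SR := ising_sum_zero hE J
  have hLHS : ∑ ωi ∈ A, fkMarginal J (fun _ => h) E ωi
      = (∑ ωi ∈ A, Wfun J h E ωi) / SW := by
    rw [Finset.sum_div]
    refine Finset.sum_congr rfl fun ωi _ => ?_
    unfold fkMarginal
    have hden : (∑ ω' : GConfig E, fkWeight J (fun _ => h) E ω') = SW := by
      rw [Fintype.sum_prod_type]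
      exact Finset.sum_congr rfl fun ω _ => fk_sum' J h ω
    have hp : ∀ ωg : V → Bool, fkProb J (fun _ => h) E (ωi, ωg)
        = fkWeight J (fun _ => h) E (ωi, ωg) / SW := by
      intro ωg; unfold fkProb; rw [hden]
    rw [Finset.sum_congr rfl fun ωg _ => hp ωg, ← Finset.sum_div, fk_sum']
  have hRprob : ∑ ωi ∈ A, rcProb J E ωi = (∑ ωi ∈ A, rcWeight J E ωi) / SR := by
    rw [Finset.sum_div]
    exact Finset.sum_congr rfl fun ωi _ => by unfold rcProb; rw [← hSRdef]
  have hD : (∑ σ : V → Bool, isingProb J (fun _ => 0) E σ * Real.exp (h * ∑ v, spin (σ v)))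
      = (Real.exp (h * n) * SW) / SR := by
    have hterm : ∀ σ : V → Bool,
        isingProb J (fun _ => 0) E σ * Real.exp (h * ∑ v, spin (σ v))
          = isingWeight J (fun _ => h) E σ / Z0 := by
      intro σ
      unfold isingProb
      rw [← hZ0def, div_mul_eq_mul_div]
      congr 1
      unfold isingWeight
      rw [← Real.exp_add]
      congr 1
      rw [Finset.mul_sum]
      simp
    rw [Finset.sum_congr rfl fun σ _ => hterm σ, ← Finset.sum_div, ising_sum_h hE J h,
      hZ0eq, ← hSWdef, mul_div_mul_left _ _ (ne_of_gt hcEpos)]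
  rw [hLHS, hRprob, hD]
  have hexpSW : 0 < Real.exp (h * n) * SW := mul_pos (Real.exp_pos _) hSWpos
  have hstep : ((∑ ωi ∈ A, rcWeight J E ωi) / SR) / ((Real.exp (h * n) * SW) / SR)
      = (∑ ωi ∈ A, rcWeight J E ωi) / (Real.exp (h * n) * SW) := by
    have h1 : SR ≠ 0 := ne_of_gt hSRpos
    have h2 : Real.exp (h * n) * SW ≠ 0 := ne_of_gt hexpSW
    rw [div_div_div_eq]
    rw [div_eq_div_iff (by positivity) h2]
    ring
  rw [hstep, ge_iff_le, div_le_div_iff₀ hexpSW hSWpos]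
  have hkey : ∑ ωi ∈ A, rcWeight J E ωi
      ≤ Real.exp (h * n) * ∑ ωi ∈ A, Wfun J h E ωi := by
    rw [Finset.mul_sum]
    exact Finset.sum_le_sum fun ω _ => rcWeight_le_Wfun J hJ h ω
  calc (∑ ωi ∈ A, rcWeight J E ωi) * SW
      ≤ (Real.exp (h * n) * ∑ ωi ∈ A, Wfun J h E ωi) * SW :=
        mul_le_mul_of_nonneg_right hkey hSWpos.le
    _ = (∑ ωi ∈ A, Wfun J h E ωi) * (Real.exp (h * n) * SW) := by ring
end Final
end

section
/- Conditional ghost-connection probability for general cluster weight q > 0 (finite-graph version of the Remark at the end of the Appendix): for every ω̃ ∈ {0,1}^E and every cluster C of ω̃, under P̂^q_{J,H} conditioned on {ω|_E = ω̃} one has P̂^q_{J,H}( C ↔ g | ω|_E = ω̃ ) = tanh(H(C)) / ( 1 + (q−2)/(e^{2 H(C)} + 1) ). -/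
open scoped Classical

namespace FK

variable {V : Type*} [Fintype V] [DecidableEq V]

/-- Unnormalized random-cluster weight with ghost, general cluster weight `q`. -/
noncomputable def fkWeightQ (q : ℝ) (J : Sym2 V → ℝ) (H : V → ℝ) (E : Finset (Sym2 V))
    (ω : GConfig E) : ℝ :=
  q ^ kGhost E ω * edgeWeight J E ω.1 *
    ∏ v, if ω.2 v then 1 - Real.exp (-2 * H v) else Real.exp (-2 * H v)

/-- The random-cluster measure with ghost, general cluster weight `q`. -/
noncomputable def fkProbQ (q : ℝ) (J : Sym2 V → ℝ) (H : V → ℝ) (E : Finset (Sym2 V))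
    (ω : GConfig E) : ℝ :=
  fkWeightQ q J H E ω / ∑ ω' : GConfig E, fkWeightQ q J H E ω'

/-- The marginal on internal edges of the random-cluster measure with ghost,
general cluster weight `q`. -/
noncomputable def fkMarginalQ (q : ℝ) (J : Sym2 V → ℝ) (H : V → ℝ) (E : Finset (Sym2 V))
    (ωi : Config E) : ℝ :=
  ∑ ωg : V → Bool, fkProbQ q J H E (ωi, ωg)

/-- Unnormalized zero-field random-cluster weight, general cluster weight `q`. -/
noncomputable def rcWeightQ (q : ℝ) (J : Sym2 V → ℝ) (E : Finset (Sym2 V))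
    (ω : Config E) : ℝ :=
  q ^ (clusters E ω).card * edgeWeight J E ω

/-- The zero-field random-cluster measure, general cluster weight `q`. -/
noncomputable def rcProbQ (q : ℝ) (J : Sym2 V → ℝ) (E : Finset (Sym2 V))
    (ω : Config E) : ℝ :=
  rcWeightQ q J E ω / ∑ ω' : Config E, rcWeightQ q J E ω'

end FK

namespace FK

set_option linter.unusedSectionVars false

variable {V : Type*} [Fintype V] [DecidableEq V]

lemma adj_symm {E : Finset (Sym2 V)} {ω : Config E} {u v : V} (h : adj E ω u v) :
    adj E ω v u := by
  obtain ⟨hne, he, ho⟩ := h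
  refine ⟨hne.symm, ?_⟩
  have h2 : s(v, u) = s(u, v) := Sym2.eq_swap
  simp only [h2]
  exact ⟨he, ho⟩

lemma conn_symm {E : Finset (Sym2 V)} {ω : Config E} {u v : V} (h : conn E ω u v) :
    conn E ω v u := by
  unfold conn at h ⊢
  induction h with
  | refl => exact .refl
  | tail _ hab ih => exact Relation.ReflTransGen.head (adj_symm hab) ih

lemma mem_cluster {E : Finset (Sym2 V)} {ω : Config E} {v u : V} :
    u ∈ cluster E ω v ↔ conn E ω v u := by
  simp [cluster]

lemma cluster_eq_of_conn {E : Finset (Sym2 V)} {ω : Config E} {u v : V}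
    (h : conn E ω v u) : cluster E ω u = cluster E ω v := by
  ext w
  simp only [mem_cluster]
  exact ⟨fun hw => h.trans hw, fun hw => (conn_symm h).trans hw⟩

lemma connG_of_conn {E : Finset (Sym2 V)} {ωi : Config E} {ωg : V → Bool} {u w : V}
    (h : conn E ωi u w) : connG E (ωi, ωg) (some u) (some w) := by
  induction h with
  | refl => exact .refl
  | tail _ hadj ih => exact ih.tail hadj

lemma connG_some_none_iff {E : Finset (Sym2 V)} {ωi : Config E} {ωg : V → Bool} {v : V} :
    connG E (ωi, ωg) (some v) none ↔ ∃ u, conn E ωi v u ∧ ωg u = true := by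
  constructor
  · intro hx
    have hgen : ∀ x : Option V, connG E (ωi, ωg) x none →
        ∀ u : V, x = some u → ∃ u', conn E ωi u u' ∧ ωg u' = true := by
      intro x hx
      induction hx using Relation.ReflTransGen.head_induction_on with
      | refl => intro u hu; cases hu
      | head h' h ih =>
        intro u hu
        subst hu
        rename_i a c
        match c, h', ih with
        | none, h', _ => exact ⟨u, .refl, h'⟩
        | some w, h', ih =>
          obtain ⟨u', hc, ho⟩ := ih w rfl
          exact ⟨u', hc.head h', ho⟩
    exact hgen _ hx v rfl
  · rintro ⟨u, hc, ho⟩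
    exact (connG_of_conn hc).tail ho

lemma connG_some_some {E : Finset (Sym2 V)} {ωi : Config E} {ωg : V → Bool} {v : V}
    (hng : ¬ connG E (ωi, ωg) (some v) none) {y : Option V}
    (h : connG E (ωi, ωg) (some v) y) : ∃ w, y = some w ∧ conn E ωi v w := by
  induction h with
  | refl => exact ⟨v, rfl, .refl⟩
  | tail hxy hadj ih =>
    obtain ⟨w, rfl, hw⟩ := ih
    rename_i c
    match c, hadj with
    | none, hadj => exact absurd ((connG_of_conn hw).tail hadj) hng
    | some w', hadj => exact ⟨w', rfl, hw.tail hadj⟩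

lemma not_connG_iff {E : Finset (Sym2 V)} {ωi : Config E} {ωg : V → Bool} {v : V} :
    ¬ connG E (ωi, ωg) (some v) none ↔ ∀ u ∈ cluster E ωi v, ωg u = false := by
  rw [connG_some_none_iff]
  push_neg
  constructor
  · intro h u hu
    have := h u (mem_cluster.mp hu)
    simpa using this
  · intro h u hc
    have := h u (mem_cluster.mpr hc)
    simp [this]

lemma filter_connG_eq_cluster {E : Finset (Sym2 V)} {ωi : Config E} {ωg : V → Bool} {v : V}
    (hng : ¬ connG E (ωi, ωg) (some v) none) :
    (Finset.univ.filter (fun u : V => connG E (ωi, ωg) (some v) (some u))) = cluster E ωi v := by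
  ext u
  simp only [Finset.mem_filter, Finset.mem_univ, true_and, mem_cluster]
  constructor
  · intro h
    obtain ⟨w, hw, hc⟩ := connG_some_some hng h
    cases hw; exact hc
  · exact connG_of_conn

lemma kGhost_eq {E : Finset (Sym2 V)} (ωi : Config E) (ωg : V → Bool) :
    kGhost E (ωi, ωg) =
      ((clusters E ωi).filter (fun D => ∀ u ∈ D, ωg u = false)).card := by
  unfold kGhost
  congr 1
  ext D
  simp only [Finset.mem_image, Finset.mem_filter, Finset.mem_univ, true_and]
  constructor
  · rintro ⟨v, hng, rfl⟩
    rw [filter_connG_eq_cluster hng]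
    refine ⟨?_, not_connG_iff.mp hng⟩
    exact Finset.mem_image.mpr ⟨v, Finset.mem_univ v, rfl⟩
  · rintro ⟨hD, hall⟩
    obtain ⟨v, -, rfl⟩ := Finset.mem_image.mp hD
    have hng : ¬ connG E (ωi, ωg) (some v) none := not_connG_iff.mpr hall
    exact ⟨v, hng, filter_connG_eq_cluster hng⟩

lemma clusters_disjoint {E : Finset (Sym2 V)} {ωi : Config E} {C D : Finset V}
    (hC : C ∈ clusters E ωi) (hD : D ∈ clusters E ωi) (hne : D ≠ C) {u : V}
    (huD : u ∈ D) : u ∉ C := by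
  obtain ⟨a, -, rfl⟩ := Finset.mem_image.mp hC
  obtain ⟨b, -, rfl⟩ := Finset.mem_image.mp hD
  intro huC
  exact hne (by rw [← cluster_eq_of_conn (mem_cluster.mp huD),
    ← cluster_eq_of_conn (mem_cluster.mp huC)])

lemma cluster_self {E : Finset (Sym2 V)} {ωi : Config E} (v : V) :
    v ∈ cluster E ωi v := mem_cluster.mpr .refl

end FK

/-- conditional ghost-connection probability for general
cluster weight `q > 0`. -/
theorem fk_ghost_connection_conditional_general_q
    {V : Type*} [Fintype V] [DecidableEq V]
    (E : Finset (Sym2 V)) (hE : ∀ e ∈ E, ¬ e.IsDiag)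
    (J : Sym2 V → ℝ) (hJ : ∀ e ∈ E, 0 ≤ J e)
    (H : V → ℝ) (hH : ∀ v, 0 ≤ H v)
    (q : ℝ) (hq : 0 < q)
    (ωi : FK.Config E) (hpos : 0 < FK.fkMarginalQ q J H E ωi)
    (C : Finset V) (hC : C ∈ FK.clusters E ωi) :
    (∑ ωg : V → Bool,
        if ∃ v ∈ C, FK.connG E (ωi, ωg) (some v) none
        then FK.fkProbQ q J H E (ωi, ωg) else 0)
      / FK.fkMarginalQ q J H E ωi
    = Real.tanh (∑ v ∈ C, H v) /
        (1 + (q - 2) / (Real.exp (2 * ∑ v ∈ C, H v) + 1)) := by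
  classical
  obtain ⟨v₀, -, hCv⟩ := Finset.mem_image.mp hC
  have hmemC : ∀ u ∈ C, FK.cluster E ωi u = C := by
    intro u hu
    rw [← hCv] at hu ⊢
    rw [FK.cluster_eq_of_conn (FK.mem_cluster.mp hu)]
  -- notation
  set h : ℝ := ∑ v ∈ C, H v with hh
  have hhnn : 0 ≤ h := Finset.sum_nonneg fun v _ => hH v
  set W : V → Bool → ℝ :=
    fun v b => if b then 1 - Real.exp (-2 * H v) else Real.exp (-2 * H v) with hW
  set F : (V → Bool) → ℝ := fun ωg => q ^ FK.kGhost E (ωi, ωg) * ∏ v, W v (ωg v) with hF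
  set Z : ℝ := ∑ ω' : FK.GConfig E, FK.fkWeightQ q J H E ω' with hZ
  set c : ℝ := FK.edgeWeight J E ωi / Z with hc
  have hprob : ∀ ωg : V → Bool, FK.fkProbQ q J H E (ωi, ωg) = c * F ωg := by
    intro ωg
    show FK.fkWeightQ q J H E (ωi, ωg) / Z = c * F ωg
    rw [hc, hF]
    show (q ^ FK.kGhost E (ωi, ωg) * FK.edgeWeight J E ωi * ∏ v, W v (ωg v)) / Z = _
    ring
  -- the event depends only on ωg restricted to C
  have hevent : ∀ ωg : V → Bool,
      (∃ v ∈ C, FK.connG E (ωi, ωg) (some v) none) ↔ ∃ u ∈ C, ωg u = true := by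
    intro ωg
    constructor
    · rintro ⟨v, hv, hconn⟩
      obtain ⟨u, hcu, hu⟩ := FK.connG_some_none_iff.mp hconn
      refine ⟨u, ?_, hu⟩
      rw [← hmemC v hv]
      exact FK.mem_cluster.mpr hcu
    · rintro ⟨u, hu, hgu⟩
      exact ⟨u, hu, FK.connG_some_none_iff.mpr ⟨u, .refl, hgu⟩⟩
  -- kGhost splits
  have hksplit : ∀ ωg : V → Bool,
      FK.kGhost E (ωi, ωg) =
        (if ∀ u ∈ C, ωg u = false then 1 else 0) +
        (((FK.clusters E ωi).erase C).filter (fun D => ∀ u ∈ D, ωg u = false)).card := by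
    intro ωg
    rw [FK.kGhost_eq]
    conv_lhs => rw [← Finset.insert_erase hC, Finset.filter_insert]
    split_ifs with hPC
    · rw [Finset.card_insert_of_notMem
        (fun hmem => (Finset.notMem_erase C _) (Finset.filter_subset _ _ hmem))]
      omega
    · omega
  set fIn : (V → Bool) → ℝ :=
    fun ωg => q ^ (if ∀ u ∈ C, ωg u = false then 1 else 0) * ∏ v ∈ C, W v (ωg v) with hfIn
  set gOut : (V → Bool) → ℝ :=
    fun ωg => q ^ (((FK.clusters E ωi).erase C).filter
        (fun D => ∀ u ∈ D, ωg u = false)).card * ∏ v ∈ Cᶜ, W v (ωg v) with hgOut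
  have hfactor : ∀ ωg : V → Bool, F ωg = fIn ωg * gOut ωg := by
    intro ωg
    rw [hF, hfIn, hgOut]
    show q ^ FK.kGhost E (ωi, ωg) * ∏ v, W v (ωg v) = _
    rw [hksplit ωg, pow_add, ← Finset.prod_mul_prod_compl C (fun v => W v (ωg v))]
    ring
  -- locality
  have hfIn_loc : ∀ ωg ωg' : V → Bool, (∀ u ∈ C, ωg u = ωg' u) → fIn ωg = fIn ωg' := by
    intro ωg ωg' hag
    rw [hfIn]
    have h1 : (∀ u ∈ C, ωg u = false) ↔ (∀ u ∈ C, ωg' u = false) := by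
      constructor
      · intro hp u hu; rw [← hag u hu]; exact hp u hu
      · intro hp u hu; rw [hag u hu]; exact hp u hu
    simp only [h1]
    congr 1
    exact Finset.prod_congr rfl fun v hv => by rw [hag v hv]
  have hgOut_loc : ∀ ωg ωg' : V → Bool, (∀ u, u ∉ C → ωg u = ωg' u) → gOut ωg = gOut ωg' := by
    intro ωg ωg' hag
    rw [hgOut]
    have h1 : ((FK.clusters E ωi).erase C).filter (fun D => ∀ u ∈ D, ωg u = false)
        = ((FK.clusters E ωi).erase C).filter (fun D => ∀ u ∈ D, ωg' u = false) := by
      apply Finset.filter_congr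
      intro D hD
      obtain ⟨hne, hDc⟩ := Finset.mem_erase.mp hD
      have hnotC : ∀ u ∈ D, u ∉ C := fun u hu => FK.clusters_disjoint hC hDc hne hu
      constructor
      · intro hp u hu; rw [← hag u (hnotC u hu)]; exact hp u hu
      · intro hp u hu; rw [hag u (hnotC u hu)]; exact hp u hu
    simp only [h1]
    congr 1
    exact Finset.prod_congr rfl fun v hv => by
      rw [hag v (by simpa using hv)]
  -- splitting configurations into C-part and complement part
  set e : (V → Bool) ≃ (({x // x ∈ C} → Bool) × ({x // ¬ x ∈ C} → Bool)) :=
    Equiv.piEquivPiSubtypeProd (fun v => v ∈ C) (fun _ => Bool) with he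
  set σ : ({x // x ∈ C} → Bool) → ({x // ¬ x ∈ C} → Bool) → (V → Bool) :=
    fun a b => e.symm (a, b) with hσ
  have hσC : ∀ a b v (hv : v ∈ C), σ a b v = a ⟨v, hv⟩ := by
    intro a b v hv
    rw [hσ, he]
    simp [Equiv.piEquivPiSubtypeProd, hv]
  have hσNC : ∀ a b v (hv : ¬ v ∈ C), σ a b v = b ⟨v, hv⟩ := by
    intro a b v hv
    rw [hσ, he]
    simp [Equiv.piEquivPiSubtypeProd, hv]
  set bff : ({x // ¬ x ∈ C} → Bool) := fun _ => false with hbff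
  set aff : ({x // x ∈ C} → Bool) := fun _ => false with haff
  set fS : ({x // x ∈ C} → Bool) → ℝ := fun a => fIn (σ a bff) with hfS
  set gS : ({x // ¬ x ∈ C} → Bool) → ℝ := fun b => gOut (σ aff b) with hgS
  have hfagree : ∀ a b, fIn (σ a b) = fS a := by
    intro a b
    rw [hfS]
    exact hfIn_loc _ _ fun u hu => by rw [hσC a b u hu, hσC a bff u hu]
  have hgagree : ∀ a b, gOut (σ a b) = gS b := by
    intro a b
    rw [hgS]
    exact hgOut_loc _ _ fun u hu => by rw [hσNC a b u hu, hσNC aff b u hu]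
  have heventS : ∀ a b, ((∃ u ∈ C, σ a b u = true) ↔ ∃ s : {x // x ∈ C}, a s = true) := by
    intro a b
    constructor
    · rintro ⟨u, hu, hgu⟩
      exact ⟨⟨u, hu⟩, by rw [← hσC a b u hu]; exact hgu⟩
    · rintro ⟨s, hs⟩
      exact ⟨s.1, s.2, by rw [hσC a b s.1 s.2, Subtype.coe_eta]; exact hs⟩
  -- factorized sums
  set BA : ℝ := ∑ a, fS a with hBA
  set NA : ℝ := ∑ a, (if ∃ s : {x // x ∈ C}, a s = true then fS a else 0) with hNA
  set T : ℝ := ∑ b, gS b with hT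
  have hBsum : ∑ ωg : V → Bool, F ωg = BA * T := by
    rw [← Equiv.sum_comp e.symm F, Fintype.sum_prod_type, hBA, hT, Finset.sum_mul_sum]
    exact Finset.sum_congr rfl fun a _ => Finset.sum_congr rfl fun b _ => by
      rw [show e.symm (a, b) = σ a b from rfl, hfactor, hfagree, hgagree]
  have hNsum : (∑ ωg : V → Bool,
      if ∃ v ∈ C, FK.connG E (ωi, ωg) (some v) none then F ωg else 0) = NA * T := by
    rw [← Equiv.sum_comp e.symm
      (fun ωg => if ∃ v ∈ C, FK.connG E (ωi, ωg) (some v) none then F ωg else 0),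
      Fintype.sum_prod_type, hNA, hT, Finset.sum_mul_sum]
    refine Finset.sum_congr rfl fun a _ => Finset.sum_congr rfl fun b _ => ?_
    show (if ∃ v ∈ C, FK.connG E (ωi, σ a b) (some v) none then F (σ a b) else 0) = _
    rw [hfactor, hfagree, hgagree]
    by_cases hP : ∃ s : {x // x ∈ C}, a s = true
    · rw [if_pos hP, if_pos (by rw [hevent, heventS a b]; exact hP)]
    · rw [if_neg hP, if_neg (by rw [hevent, heventS a b]; exact hP), zero_mul]
  -- positivity / nonvanishing
  have hmarg : FK.fkMarginalQ q J H E ωi = c * (BA * T) := by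
    rw [FK.fkMarginalQ, ← hBsum, Finset.mul_sum]
    exact Finset.sum_congr rfl fun ωg _ => hprob ωg
  have hcne : c ≠ 0 := by
    intro h0
    rw [hmarg, h0, zero_mul] at hpos
    exact lt_irrefl _ hpos
  have hBTne : BA * T ≠ 0 := by
    intro h0
    rw [hmarg, h0, mul_zero] at hpos
    exact lt_irrefl _ hpos
  have hTne : T ≠ 0 := fun h0 => hBTne (by rw [h0, mul_zero])
  have hBAne : BA ≠ 0 := fun h0 => hBTne (by rw [h0, zero_mul])
  -- reduce the LHS
  have hLHS : (∑ ωg : V → Bool,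
      if ∃ v ∈ C, FK.connG E (ωi, ωg) (some v) none
      then FK.fkProbQ q J H E (ωi, ωg) else 0) / FK.fkMarginalQ q J H E ωi
      = NA / BA := by
    have hnum : (∑ ωg : V → Bool,
        if ∃ v ∈ C, FK.connG E (ωi, ωg) (some v) none
        then FK.fkProbQ q J H E (ωi, ωg) else 0) = c * (NA * T) := by
      rw [← hNsum, Finset.mul_sum]
      refine Finset.sum_congr rfl fun ωg _ => ?_
      rw [hprob ωg]
      by_cases hP : ∃ v ∈ C, FK.connG E (ωi, ωg) (some v) none
      · rw [if_pos hP, if_pos hP]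
      · rw [if_neg hP, if_neg hP, mul_zero]
    rw [hnum, hmarg, mul_div_mul_left _ _ hcne, ← mul_div_mul_right NA BA hTne]
  rw [hLHS]
  -- compute fS explicitly
  set A : ℝ := Real.exp (-2 * h) with hA
  have hApos : 0 < A := Real.exp_pos _
  have hAle : A ≤ 1 := by
    rw [hA]
    apply Real.exp_le_one_iff.mpr
    nlinarith
  have hWfalse : ∏ s : {x // x ∈ C}, W s.1 false = A := by
    rw [hW]
    show ∏ s : {x // x ∈ C}, Real.exp (-2 * H s.1) = A
    rw [← Real.exp_sum, hA, hh]
    congr 1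
    rw [Finset.sum_coe_sort C (fun v => -2 * H v), Finset.mul_sum]
  have hWaff : ∏ s : {x // x ∈ C}, W s.1 (aff s) = A := by
    exact hWfalse
  have hfS_explicit : ∀ a : {x // x ∈ C} → Bool,
      fS a = q ^ (if a = aff then 1 else 0) * ∏ s : {x // x ∈ C}, W s.1 (a s) := by
    intro a
    rw [hfS]
    show (q ^ if ∀ u ∈ C, σ a bff u = false then 1 else 0) * ∏ v ∈ C, W v (σ a bff v) = _
    have h1 : (∀ u ∈ C, σ a bff u = false) ↔ a = aff := by
      constructor
      · intro hp
        funext s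
        have := hp s.1 s.2
        rwa [hσC a bff s.1 s.2, Subtype.coe_eta] at this
      · intro hp u hu
        rw [hσC a bff u hu, hp]
    have h2 : ∏ v ∈ C, W v (σ a bff v) = ∏ s : {x // x ∈ C}, W s.1 (a s) := by
      rw [← Finset.prod_attach C (fun v => W v (σ a bff v)), Finset.univ_eq_attach]
      exact Finset.prod_congr rfl fun s _ => by rw [hσC a bff s.1 s.2, Subtype.coe_eta]
    simp only [h1, h2]
  have hsum1 : ∑ a : {x // x ∈ C} → Bool, ∏ s : {x // x ∈ C}, W s.1 (a s) = 1 := by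
    rw [← Fintype.prod_sum (fun (s : {x // x ∈ C}) (b : Bool) => W s.1 b)]
    apply Finset.prod_eq_one
    intro s _
    rw [Fintype.sum_bool]
    show (1 - Real.exp (-2 * H s.1)) + Real.exp (-2 * H s.1) = 1
    ring
  have hBAval : BA = 1 + (q - 1) * A := by
    rw [hBA]
    have hptw : ∀ a : {x // x ∈ C} → Bool, fS a
        = (∏ s : {x // x ∈ C}, W s.1 (a s)) +
          (if a = aff then (q - 1) * ∏ s : {x // x ∈ C}, W s.1 (a s) else 0) := by
      intro a
      rw [hfS_explicit a]
      by_cases hp : a = aff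
      · rw [if_pos hp, if_pos hp, pow_one]; ring
      · rw [if_neg hp, if_neg hp, pow_zero]; ring
    rw [Finset.sum_congr rfl fun a _ => hptw a, Finset.sum_add_distrib, hsum1,
      Finset.sum_ite_eq' Finset.univ aff
        (fun a => (q - 1) * ∏ s : {x // x ∈ C}, W s.1 (a s)), if_pos (Finset.mem_univ _),
      hWaff]
  have hfSaff : fS aff = q * A := by
    rw [hfS_explicit aff, if_pos rfl, pow_one, hWaff]
  have hNAval : NA = 1 - A := by
    rw [hNA]
    have hcond : ∀ a : {x // x ∈ C} → Bool, (∃ s, a s = true) ↔ ¬ (a = aff) := by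
      intro a
      rw [haff, funext_iff]
      push_neg
      constructor
      · rintro ⟨s, hs⟩; exact ⟨s, by simp [hs]⟩
      · rintro ⟨s, hs⟩; exact ⟨s, by simpa using hs⟩
    have hptw : ∀ a : {x // x ∈ C} → Bool,
        (if ∃ s, a s = true then fS a else 0) = fS a - (if a = aff then fS a else 0) := by
      intro a
      by_cases hp : a = aff
      · rw [if_neg (by rw [hcond]; exact not_not_intro hp), if_pos hp, sub_self]
      · rw [if_pos ((hcond a).mpr hp), if_neg hp, sub_zero]
    rw [Finset.sum_congr rfl fun a _ => hptw a, Finset.sum_sub_distrib, ← hBA, hBAval,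
      Finset.sum_ite_eq' Finset.univ aff (fun a => fS a), if_pos (Finset.mem_univ _), hfSaff]
    ring
  rw [hNAval, hBAval]
  -- final algebra
  have hem : Real.exp (-h) * Real.exp h = 1 := by
    rw [← Real.exp_add]; simp
  have hA2 : A = Real.exp (-h) * Real.exp (-h) := by
    rw [hA, ← Real.exp_add]; ring_nf
  have htanh : Real.tanh h = (1 - A) / (1 + A) := by
    rw [Real.tanh_eq_sinh_div_cosh, Real.sinh_eq, Real.cosh_eq]
    have hd1 : (Real.exp h + Real.exp (-h)) / 2 ≠ 0 := by positivity
    have hd2 : (1 : ℝ) + A ≠ 0 := by positivity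
    rw [div_eq_div_iff hd1 hd2, hA2]
    linear_combination Real.exp (-h) * hem
  have hqA : (0:ℝ) < 1 + (q - 1) * A := by nlinarith
  have he2pos : (0:ℝ) < Real.exp (2 * h) + 1 := by positivity
  have he2A : Real.exp (2 * h) * A = 1 := by
    rw [hA, ← Real.exp_add]; norm_num
  have hApos2 : (0:ℝ) < 1 + A := by linarith
  have hden2 : 1 + (q - 2) / (Real.exp (2 * h) + 1) = (1 + (q - 1) * A) / (1 + A) := by
    rw [add_div' _ _ _ (ne_of_gt he2pos), div_eq_div_iff (ne_of_gt he2pos) (ne_of_gt hApos2)]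
    linear_combination (2 - q) * he2A
  rw [htanh, hden2, div_div_div_comm, div_self (ne_of_gt hApos2), div_one]
end
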